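/- Let U be a finite set, A a finite set of functions A: U^n → Im(A), and p_A a probability distribution on A. Suppose there exist constants α, β ≥ 0 such that for every u ∈ U^n, the sum over all u' ≠ u with p_A({A : Au = Au'}) > α/|Im(A)| of p_A({A : Au = Au'}) is at most β. Then for all subsets T, T' ⊆ U^n: Σ_{u∈T, u'∈T'} p_A({A : Au = Au'}) ≤ |T ∩ T'| + |T||T'|α/|Im(A)| + min{|T|,|T'|}·β. -/

import Mathlib

open Finset
open scoped Classical

/-- Collision probability `p_A({A : Au = Au'})` for an ensemble of functions. -/
noncomputable def collP {𝒜 X B : Type*} [Fintype 𝒜] (p : 𝒜 → ℝ)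
    (F : 𝒜 → X → B) (u u' : X) : ℝ :=
  ∑ a : 𝒜, if F a u = F a u' then p a else 0

lemma collP_comm {𝒜 X B : Type*} [Fintype 𝒜] (p : 𝒜 → ℝ)
    (F : 𝒜 → X → B) (u u' : X) : collP p F u u' = collP p F u' u := by
  unfold collP
  refine Finset.sum_congr rfl fun a _ => ?_
  simp [eq_comm]

lemma aux_bound {U B 𝒜 : Type*} [Fintype U] [Fintype B] [Fintype 𝒜] (n : ℕ)
    (p : 𝒜 → ℝ) (hp : ∀ a, 0 ≤ p a) (hp1 : ∑ a : 𝒜, p a = 1)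
    (F : 𝒜 → (Fin n → U) → B) (α β : ℝ) (hα : 0 ≤ α)
    (hhash : ∀ u : Fin n → U,
      ∑ u' ∈ (Finset.univ.erase u).filter
          (fun u' => α / (Fintype.card B : ℝ) < collP p F u u'),
        collP p F u u' ≤ β)
    (T T' : Finset (Fin n → U)) :
    ∑ u ∈ T, ∑ u' ∈ T', collP p F u u' ≤
      ((T ∩ T').card : ℝ) + (T.card : ℝ) * (T'.card : ℝ) * α / (Fintype.card B : ℝ)
        + (T.card : ℝ) * β := by
  have hcoll0 : ∀ u u' : Fin n → U, 0 ≤ collP p F u u' := fun u u' =>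
    Finset.sum_nonneg fun a _ => by split_ifs <;> simp [hp a]
  have hdiv : 0 ≤ α / (Fintype.card B : ℝ) := by positivity
  have key : ∀ u ∈ T, ∑ u' ∈ T', collP p F u u' ≤
      (if u ∈ T' then (1:ℝ) else 0) + (T'.card : ℝ) * (α / (Fintype.card B : ℝ)) + β := by
    intro u _
    have herase : ∑ u' ∈ T'.erase u, collP p F u u' ≤
        (T'.card : ℝ) * (α / (Fintype.card B : ℝ)) + β := by
      set P := fun u' => α / (Fintype.card B : ℝ) < collP p F u u' with hP
      rw [← Finset.sum_filter_add_sum_filter_not (T'.erase u) P]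
      have h1 : ∑ u' ∈ (T'.erase u).filter P, collP p F u u' ≤ β := by
        refine le_trans (Finset.sum_le_sum_of_subset_of_nonneg ?_
          fun i _ _ => hcoll0 u i) (hhash u)
        exact Finset.filter_subset_filter _
          (Finset.erase_subset_erase _ (Finset.subset_univ _))
      have h2 : ∑ u' ∈ (T'.erase u).filter (fun x => ¬ P x), collP p F u u' ≤
          (T'.card : ℝ) * (α / (Fintype.card B : ℝ)) := by
        calc ∑ u' ∈ (T'.erase u).filter (fun x => ¬ P x), collP p F u u'
            ≤ ∑ _u' ∈ (T'.erase u).filter (fun x => ¬ P x), (α / (Fintype.card B : ℝ)) :=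
              Finset.sum_le_sum fun i hi => le_of_not_gt (Finset.mem_filter.mp hi).2
          _ = (((T'.erase u).filter (fun x => ¬ P x)).card : ℝ) * (α / (Fintype.card B : ℝ)) := by
              rw [Finset.sum_const, nsmul_eq_mul]
          _ ≤ (T'.card : ℝ) * (α / (Fintype.card B : ℝ)) := by
              apply mul_le_mul_of_nonneg_right _ hdiv
              exact_mod_cast Finset.card_le_card
                ((Finset.filter_subset _ _).trans (Finset.erase_subset _ _))
      linarith
    by_cases hu : u ∈ T'
    · rw [← Finset.add_sum_erase _ _ hu]
      have h1 : collP p F u u = 1 := by simp [collP, hp1]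
      simp only [hu, if_true, h1]
      linarith
    · rw [Finset.erase_eq_of_notMem hu] at herase
      simp only [hu, if_false]
      linarith
  calc ∑ u ∈ T, ∑ u' ∈ T', collP p F u u'
      ≤ ∑ u ∈ T, ((if u ∈ T' then (1:ℝ) else 0)
          + (T'.card : ℝ) * (α / (Fintype.card B : ℝ)) + β) :=
        Finset.sum_le_sum key
    _ = ((T ∩ T').card : ℝ) + (T.card : ℝ) * ((T'.card : ℝ) * (α / (Fintype.card B : ℝ)))
          + (T.card : ℝ) * β := by
        rw [Finset.sum_add_distrib, Finset.sum_add_distrib, Finset.sum_const,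
          Finset.sum_const, nsmul_eq_mul, nsmul_eq_mul]
        congr 2
        rw [← Finset.sum_filter]
        simp [Finset.filter_mem_eq_inter]
    _ ≤ _ := le_of_eq (by ring)

/-- Strong (α,β)-hash property implies the (α,β)-hash property. -/
theorem stmt0 {U B 𝒜 : Type*} [Fintype U] [Fintype B] [Fintype 𝒜] (n : ℕ)
    (p : 𝒜 → ℝ) (hp : ∀ a, 0 ≤ p a) (hp1 : ∑ a : 𝒜, p a = 1)
    (F : 𝒜 → (Fin n → U) → B) (α β : ℝ) (hα : 0 ≤ α) (hβ : 0 ≤ β)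
    (hhash : ∀ u : Fin n → U,
      ∑ u' ∈ (Finset.univ.erase u).filter
          (fun u' => α / (Fintype.card B : ℝ) < collP p F u u'),
        collP p F u u' ≤ β)
    (T T' : Finset (Fin n → U)) :
    ∑ u ∈ T, ∑ u' ∈ T', collP p F u u' ≤
      ((T ∩ T').card : ℝ) + (T.card : ℝ) * (T'.card : ℝ) * α / (Fintype.card B : ℝ)
        + (↑(min T.card T'.card) : ℝ) * β := by
  have hhash' : ∀ u : Fin n → U,
      ∑ u' ∈ (Finset.univ.erase u).filter
          (fun u' => α / (Fintype.card B : ℝ) < collP p F u u'),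
        collP p F u u' ≤ β := hhash
  rcases le_total T.card T'.card with h | h
  · have := aux_bound n p hp hp1 F α β hα hhash T T'
    rw [min_eq_left h]
    exact this
  · have := aux_bound n p hp hp1 F α β hα hhash T' T
    rw [min_eq_right h]
    have hswap : ∑ u ∈ T, ∑ u' ∈ T', collP p F u u'
        = ∑ u ∈ T', ∑ u' ∈ T, collP p F u u' := by
      rw [Finset.sum_comm]
      exact Finset.sum_congr rfl fun u _ => Finset.sum_congr rfl fun u' _ =>
        collP_comm p F u' u
    rw [hswap, Finset.inter_comm]
    calc ∑ u ∈ T', ∑ u' ∈ T, collP p F u u'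
        ≤ ((T' ∩ T).card : ℝ) + (T'.card : ℝ) * (T.card : ℝ) * α / (Fintype.card B : ℝ)
          + (T'.card : ℝ) * β := this
      _ = ((T' ∩ T).card : ℝ) + (T.card : ℝ) * (T'.card : ℝ) * α / (Fintype.card B : ℝ)
          + (T'.card : ℝ) * β := by ring
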